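/- arXiv:1505.05707 — 2 statements merged into one kernel-verified Lean document; each statement's English description precedes it below -/
import Mathlib

section
/- Let f: [0,∞) → ℝ be locally Lipschitz, L > 0, and let F(u) = ∫₀ᵘ f(s) ds. If there exists a C² function φ: [0,∞) → ℝ satisfying φ'' + f(φ) = 0, φ(0) = 0, φ'(0) = 1, and φ(y) → L as y → ∞, then f(L) = 0 and F(L) = 1/2. -/
open Real Filter MeasureTheory intervalIntegral

lemma growth (h : ℝ → ℝ) (hd : Differentiable ℝ h) (ε N : ℝ) (hε : 0 < ε)
    (hge : ∀ y, N ≤ y → ε ≤ deriv h y) : Tendsto h atTop atTop := by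
  have hdl : Differentiable ℝ (fun y : ℝ => ε * y) := by fun_prop
  have mono : MonotoneOn (fun y => h y - ε * y) (Set.Ici N) := by
    apply monotoneOn_of_deriv_nonneg (convex_Ici N)
      ((hd.sub hdl).continuous.continuousOn)
      ((hd.sub hdl).differentiableOn)
    intro x hx
    rw [interior_Ici] at hx
    rw [deriv_sub (hd x) (hdl x)]
    have : deriv (fun y : ℝ => ε * y) x = ε := by
      have := deriv_const_mul_field (v := fun y : ℝ => y) (x := x) ε; simpa using this
    rw [this]
    linarith [hge x (le_of_lt hx)]
  have key : ∀ y, N ≤ y → ε * y + (h N - ε * N) ≤ h y := by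
    intro y hy
    have := mono (Set.self_mem_Ici) (Set.mem_Ici.2 hy) hy
    simp only at this
    linarith
  refine tendsto_atTop_mono' atTop ?_ (tendsto_atTop_add_const_right atTop (h N - ε * N) (tendsto_id.const_mul_atTop hε))
  filter_upwards [eventually_ge_atTop N] with y hy using key y hy

theorem stmt_0 (f : ℝ → ℝ) (hf : LocallyLipschitz f) (L : ℝ) (hL : 0 < L)
    (F : ℝ → ℝ) (hF : ∀ u, F u = ∫ s in (0:ℝ)..u, f s)
    (φ : ℝ → ℝ) (hφ : ContDiff ℝ 2 φ)
    (hode : ∀ y ∈ Set.Ici (0:ℝ), deriv (deriv φ) y + f (φ y) = 0)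
    (h0 : φ 0 = 0) (h0' : deriv φ 0 = 1)
    (hlim : Tendsto φ atTop (nhds L)) :
    f L = 0 ∧ F L = 1/2 := by
  have hfc : Continuous f := hf.continuous
  have hφd : Differentiable ℝ φ := hφ.differentiable (by norm_num)
  have hφ' : ContDiff ℝ 1 (deriv φ) :=
    ((contDiff_succ_iff_deriv (n := 1)).mp (by exact_mod_cast hφ)).2.2
  have hφ'd : Differentiable ℝ (deriv φ) := hφ'.differentiable (by norm_num)
  have hφ'c : Continuous (deriv φ) := hφ'.continuous
  -- F is an antiderivative of f
  have hFd : ∀ u : ℝ, HasDerivAt F (f u) u := by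
    intro u
    have heq : F = fun v => ∫ s in (0:ℝ)..v, f s := funext hF
    rw [heq]
    exact intervalIntegral.integral_hasDerivAt_right (hfc.intervalIntegrable 0 u)
      (hfc.stronglyMeasurable.stronglyMeasurableAtFilter) hfc.continuousAt
  have hFdiff : Differentiable ℝ F := fun u => (hFd u).differentiableAt
  have hF0 : F 0 = 0 := by rw [hF 0, intervalIntegral.integral_same]
  -- energy
  set E : ℝ → ℝ := fun y => (deriv φ y)^2 / 2 + F (φ y) with hE
  have hEd : ∀ y : ℝ, HasDerivAt E (deriv φ y * (deriv (deriv φ) y + f (φ y))) y := by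
    intro y
    have h1 : HasDerivAt (fun y => (deriv φ y)^2 / 2) (deriv φ y * deriv (deriv φ) y) y := by
      have := ((hφ'd y).hasDerivAt.pow 2).div_const 2
      exact this.congr_deriv (by ring)
    have h2 : HasDerivAt (fun y => F (φ y)) (f (φ y) * deriv φ y) y :=
      (hFd (φ y)).comp y (hφd y).hasDerivAt
    have := h1.add h2
    exact this.congr_deriv (by ring)
  have hEc : Continuous E := by
    have : Differentiable ℝ E := fun y => (hEd y).differentiableAt
    exact this.continuous
  have hE0 : E 0 = 1/2 := by simp [hE, h0, h0', hF0]
  have hEconst : ∀ y : ℝ, 0 ≤ y → E y = 1/2 := by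
    intro y hy
    rw [← hE0]
    apply constant_of_has_deriv_right_zero (f := E) (a := 0) (b := y)
      hEc.continuousOn
      (fun x hx => by
        have hz : deriv φ x * (deriv (deriv φ) x + f (φ x)) = 0 := by
          rw [hode x (Set.mem_Ici.2 hx.1), mul_zero]
        have := (hEd x).hasDerivWithinAt (s := Set.Ici x)
        rwa [hz] at this)
      y (Set.mem_Icc.2 ⟨hy, le_refl y⟩)
  -- limit of F ∘ φ
  have hFφlim : Tendsto (fun y => F (φ y)) atTop (nhds (F L)) :=
    (hFdiff.continuous.continuousAt).tendsto.comp hlim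
  have hsqlim : Tendsto (fun y => (deriv φ y)^2) atTop (nhds (1 - 2 * F L)) := by
    have : ∀ᶠ y in atTop, (deriv φ y)^2 = 1 - 2 * F (φ y) := by
      filter_upwards [eventually_ge_atTop (0:ℝ)] with y hy
      have := hEconst y hy
      simp only [hE] at this
      linarith
    have h2 : Tendsto (fun y => 1 - 2 * F (φ y)) atTop (nhds (1 - 2 * F L)) := by
      have := hFφlim.const_mul 2
      exact (tendsto_const_nhds.sub this)
    exact h2.congr' (this.mono fun y h => h.symm)
  -- Step 1: F L = 1/2
  have hc0 : 0 ≤ 1 - 2 * F L := ge_of_tendsto' hsqlim (fun y => sq_nonneg _)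
  have hFL : F L = 1/2 := by
    by_contra hne
    have hc : 0 < 1 - 2 * F L := lt_of_le_of_ne hc0 (fun h => hne (by linarith))
    have hev : ∀ᶠ y in atTop, (1 - 2 * F L)/2 < (deriv φ y)^2 :=
      hsqlim.eventually (eventually_gt_nhds (by linarith))
    obtain ⟨N, hN⟩ := eventually_atTop.mp hev
    have hne0 : ∀ y, N ≤ y → deriv φ y ≠ 0 := by
      intro y hy h
      have := hN y hy
      rw [h] at this
      nlinarith
    set ε := Real.sqrt ((1 - 2 * F L)/2) with hεdef
    have hεpos : 0 < ε := Real.sqrt_pos.2 (by linarith)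
    have habs : ∀ y, N ≤ y → ε ≤ |deriv φ y| := by
      intro y hy
      rw [hεdef, ← Real.sqrt_sq_eq_abs]
      exact Real.sqrt_le_sqrt (le_of_lt (hN y hy))
    rcases lt_or_gt_of_ne (hne0 N le_rfl) with hneg | hpos
    · -- deriv φ N < 0 : φ → -∞
      have hneg' : ∀ y, N ≤ y → ε ≤ deriv (fun z => -φ z) y := by
        intro y hy
        rw [deriv.fun_neg]
        have hyneg : deriv φ y < 0 := by
          rcases lt_trichotomy (deriv φ y) 0 with h | h | h
          · exact h
          · exact absurd h (hne0 y hy)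
          · exfalso
            have hmem : (0:ℝ) ∈ Set.uIcc (deriv φ N) (deriv φ y) :=
              Set.mem_uIcc.2 (Or.inl ⟨le_of_lt hneg, le_of_lt h⟩)
            obtain ⟨x, hx, hx0⟩ := intermediate_value_uIcc (hφ'c.continuousOn) hmem
            rw [Set.uIcc_of_le hy] at hx
            exact hne0 x hx.1 hx0
        have := habs y hy
        rw [abs_of_neg hyneg] at this
        linarith
      have hT : Tendsto (fun z => -φ z) atTop atTop :=
        growth _ hφd.neg ε N hεpos hneg'
      exact not_tendsto_atTop_of_tendsto_nhds hlim.neg hT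
    · -- deriv φ N > 0 : φ → ∞
      have hpos' : ∀ y, N ≤ y → ε ≤ deriv φ y := by
        intro y hy
        have hypos : 0 < deriv φ y := by
          rcases lt_trichotomy (deriv φ y) 0 with h | h | h
          · exfalso
            have hmem : (0:ℝ) ∈ Set.uIcc (deriv φ N) (deriv φ y) :=
              Set.mem_uIcc.2 (Or.inr ⟨le_of_lt h, le_of_lt hpos⟩)
            obtain ⟨x, hx, hx0⟩ := intermediate_value_uIcc (hφ'c.continuousOn) hmem
            rw [Set.uIcc_of_le hy] at hx
            exact hne0 x hx.1 hx0
          · exact absurd h (hne0 y hy)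
          · exact h
        have := habs y hy
        rwa [abs_of_pos hypos] at this
      have hT : Tendsto φ atTop atTop := growth _ hφd ε N hεpos hpos'
      exact not_tendsto_atTop_of_tendsto_nhds hlim hT
  -- Step 2: deriv φ → 0
  have hsq0 : Tendsto (fun y => (deriv φ y)^2) atTop (nhds 0) := by
    have : 1 - 2 * F L = 0 := by rw [hFL]; ring
    rwa [this] at hsqlim
  have habs0 : Tendsto (fun y => |deriv φ y|) atTop (nhds 0) := by
    have := (Real.continuous_sqrt.tendsto 0).comp hsq0
    rw [Real.sqrt_zero] at this
    refine this.congr fun y => ?_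
    simp [Function.comp, Real.sqrt_sq_eq_abs]
  have hd0 : Tendsto (deriv φ) atTop (nhds 0) := by
    have h1 : Tendsto (fun y => -|deriv φ y|) atTop (nhds 0) := by
      simpa using habs0.neg
    exact tendsto_of_tendsto_of_tendsto_of_le_of_le h1 habs0
      (fun y => neg_abs_le _) (fun y => le_abs_self _)
  -- Step 3: f L = 0
  have hflim : Tendsto (fun y => f (φ y)) atTop (nhds (f L)) :=
    (hfc.continuousAt).tendsto.comp hlim
  have hfL : f L = 0 := by
    by_contra hfne
    rcases lt_or_gt_of_ne hfne with hneg | hpos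
    · -- f L < 0 : deriv φ → ∞
      have hev : ∀ᶠ y in atTop, f (φ y) < f L / 2 :=
        hflim.eventually (eventually_lt_nhds (by linarith))
      obtain ⟨N, hN⟩ := eventually_atTop.mp (hev.and (eventually_ge_atTop (0:ℝ)))
      have hge : ∀ y, N ≤ y → -(f L)/2 ≤ deriv (deriv φ) y := by
        intro y hy
        have hy0 := (hN y hy).2
        have := hode y (Set.mem_Ici.2 hy0)
        have h2 := (hN y hy).1
        linarith
      have hT : Tendsto (deriv φ) atTop atTop :=
        growth _ hφ'd (-(f L)/2) N (by linarith) hge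
      exact not_tendsto_atTop_of_tendsto_nhds hd0 hT
    · -- f L > 0 : deriv φ → -∞
      have hev : ∀ᶠ y in atTop, f L / 2 < f (φ y) :=
        hflim.eventually (eventually_gt_nhds (by linarith))
      obtain ⟨N, hN⟩ := eventually_atTop.mp (hev.and (eventually_ge_atTop (0:ℝ)))
      have hge : ∀ y, N ≤ y → f L / 2 ≤ deriv (fun z => -(deriv φ z)) y := by
        intro y hy
        rw [deriv.fun_neg]
        have hy0 := (hN y hy).2
        have := hode y (Set.mem_Ici.2 hy0)
        have h2 := (hN y hy).1
        linarith
      have hT : Tendsto (fun z => -(deriv φ z)) atTop atTop :=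
        growth _ hφ'd.neg (f L / 2) N (by linarith) hge
      exact not_tendsto_atTop_of_tendsto_nhds hd0.neg hT
  exact ⟨hfL, hFL⟩
end

section
/- Let φ: [0,∞) → ℝ be a C² solution of φ'' + f(φ) = 0 with φ(0) = 0, φ'(0) = 1, and φ(y) → L > 0 as y → ∞, with f locally Lipschitz. Then φ'(y) > 0 for all y ≥ 0 and 0 ≤ φ(y) < L for all y ≥ 0. -/
open Real Filter MeasureTheory intervalIntegral
open Set Metric Topology

lemma compactLip {X Y : Type*} [MetricSpace X] [MetricSpace Y] {g : X → Y}
    (hg : LocallyLipschitz g) {K : Set X} (hK : IsCompact K) :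
    ∃ C : NNReal, LipschitzOnWith C g K := by
  rcases K.eq_empty_or_nonempty with h | hKne
  · exact ⟨1, by simp [h]⟩
  have hgc : Continuous g := hg.continuous
  choose Cl t ht hlip using hg
  choose r hr hball using fun x => Metric.mem_nhds_iff.mp (ht x)
  obtain ⟨s, hs⟩ := hK.elim_finite_subcover (fun x => ball x (r x / 2))
    (fun x => isOpen_ball) (fun a _ => mem_iUnion.mpr ⟨a, mem_ball_self (by linarith [hr a])⟩)
  obtain ⟨a₀, ha₀⟩ := hKne
  have hsne : s.Nonempty := by
    rcases mem_iUnion₂.mp (hs ha₀) with ⟨x, hx, _⟩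
    exact ⟨x, hx⟩
  set δ : ℝ := s.inf' hsne (fun x => r x / 2) with hδdef
  have hδpos : 0 < δ := by
    rw [Finset.lt_inf'_iff]
    intro b _; linarith [hr b]
  obtain ⟨M, hM⟩ := Metric.isBounded_iff.mp (hK.image hgc).isBounded
  set Cmax : NNReal := s.sup Cl with hCdef
  refine ⟨Cmax ⊔ (M / δ).toNNReal, LipschitzOnWith.of_dist_le_mul fun x hx y hy => ?_⟩
  rcases lt_or_ge (dist x y) δ with hlt | hge
  · rcases mem_iUnion₂.mp (hs hx) with ⟨b, hb, hxb⟩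
    have hδb : δ ≤ r b / 2 := Finset.inf'_le _ hb
    have hxtb : x ∈ t b := hball b (by
      simp only [mem_ball] at hxb ⊢; linarith [hr b])
    have hytb : y ∈ t b := hball b (by
      have : dist y b ≤ dist y x + dist x b := dist_triangle _ _ _
      simp only [mem_ball] at hxb ⊢
      rw [dist_comm] at hlt
      linarith)
    have := (hlip b).dist_le_mul x hxtb y hytb
    calc dist (g x) (g y) ≤ (Cl b : ℝ) * dist x y := this
      _ ≤ _ := by
        gcongr
        exact_mod_cast le_trans (by exact_mod_cast Finset.le_sup (f := Cl) hb) le_sup_left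
  · have hMd : dist (g x) (g y) ≤ M := hM (mem_image_of_mem g hx) (mem_image_of_mem g hy)
    have hM0 : 0 ≤ M := le_trans dist_nonneg (hM (mem_image_of_mem g hx) (mem_image_of_mem g hx))
    calc dist (g x) (g y) ≤ M := hMd
      _ = (M / δ) * δ := by field_simp
      _ ≤ (M / δ).toNNReal * dist x y :=
        mul_le_mul (Real.le_coe_toNNReal _) hge hδpos.le
          ((div_nonneg hM0 hδpos.le).trans (Real.le_coe_toNNReal _))
      _ ≤ _ :=
        mul_le_mul_of_nonneg_right (by exact_mod_cast le_sup_right) dist_nonneg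

lemma ODEunique {V : ℝ × ℝ → ℝ × ℝ} (hV : LocallyLipschitz V) {u w : ℝ → ℝ × ℝ} {a b : ℝ}
    (hu : ContinuousOn u (Icc a b)) (hw : ContinuousOn w (Icc a b))
    (hu' : ∀ t ∈ Ico a b, HasDerivWithinAt u (V (u t)) (Ici t) t)
    (hw' : ∀ t ∈ Ico a b, HasDerivWithinAt w (V (w t)) (Ici t) t)
    (hinit : u a = w a) : EqOn u w (Icc a b) := by
  have hScomp : IsCompact (u '' Icc a b ∪ w '' Icc a b) :=
    (isCompact_Icc.image_of_continuousOn hu).union (isCompact_Icc.image_of_continuousOn hw)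
  obtain ⟨C, hC⟩ := compactLip hV hScomp
  exact ODE_solution_unique_of_mem_Icc_right (v := fun _ => V)
    (s := fun _ => u '' Icc a b ∪ w '' Icc a b)
    (fun _ _ => hC) hu hu' (fun t ht => Or.inl (mem_image_of_mem u (Ico_subset_Icc_self ht)))
    hw hw' (fun t ht => Or.inr (mem_image_of_mem w (Ico_subset_Icc_self ht))) hinit

theorem stmt_2 (f : ℝ → ℝ) (hf : LocallyLipschitz f) (L : ℝ) (hL : 0 < L)
    (φ : ℝ → ℝ) (hφ : ContDiff ℝ 2 φ)
    (hode : ∀ y ∈ Set.Ici (0:ℝ), deriv (deriv φ) y + f (φ y) = 0)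
    (h0 : φ 0 = 0) (h0' : deriv φ 0 = 1)
    (hlim : Tendsto φ atTop (nhds L)) :
    ∀ y ∈ Set.Ici (0:ℝ), 0 < deriv φ y ∧ 0 ≤ φ y ∧ φ y < L := by
  -- regularity
  have h2 : ContDiff ℝ (1 + 1) φ := by
    rw [show (1 + 1 : WithTop ℕ∞) = 2 by norm_num]
    exact hφ
  rw [contDiff_succ_iff_deriv] at h2
  obtain ⟨hd1, -, hC1⟩ := h2
  have hd2 : Differentiable ℝ (deriv φ) := hC1.differentiable one_ne_zero
  -- the first-order system
  set V : ℝ × ℝ → ℝ × ℝ := fun p => (p.2, -f p.1) with hVdef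
  have hVlip : LocallyLipschitz V := by
    apply LocallyLipschitz.prodMk
    · exact LipschitzWith.prod_snd.locallyLipschitz
    · have hneg : LipschitzWith 1 (fun x : ℝ => -x) :=
        LipschitzWith.mk_one (fun x y => le_of_eq (dist_neg_neg x y))
      exact hneg.locallyLipschitz.comp (hf.comp LipschitzWith.prod_fst.locallyLipschitz)
  set u : ℝ → ℝ × ℝ := fun y => (φ y, deriv φ y) with hudef
  have hucont : Continuous u := (hd1.continuous.prodMk hd2.continuous)
  have hode' : ∀ y, 0 ≤ y → deriv (deriv φ) y = -f (φ y) := fun y hy => by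
    have := hode y hy; linarith
  have huV : ∀ y, 0 ≤ y → HasDerivAt u (V (u y)) y := fun y hy => by
    have h := ((hd1 y).hasDerivAt.prodMk ((hd2 y).hasDerivAt))
    have : V (u y) = (deriv φ y, deriv (deriv φ) y) := by
      simp only [hVdef, hudef, hode' y hy]
    rw [this]
    exact h
  -- reflection principle
  have reflect : ∀ c, 0 < c → deriv φ c = 0 → u (2 * c) = (0, -1) := by
    intro c hc hc'
    set w : ℝ → ℝ × ℝ := fun y => (φ (2 * c - y), -deriv φ (2 * c - y)) with hwdef
    have hwcont : Continuous w := by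
      apply Continuous.prodMk
      · exact hd1.continuous.comp (by continuity)
      · exact (hd2.continuous.comp (by continuity)).neg
    have hkey : EqOn u w (Icc c (2 * c)) := by
      apply ODEunique hVlip hucont.continuousOn hwcont.continuousOn
      · intro t ht
        exact (huV t (le_trans hc.le ht.1)).hasDerivWithinAt
      · intro t ht
        have h1 : (0:ℝ) ≤ 2 * c - t := by
          have := ht.2; linarith
        have hinner : HasDerivAt (fun y : ℝ => 2 * c - y) (-1) t := by
          simpa using (hasDerivAt_id t).const_sub (2 * c)
        have ha : HasDerivAt (fun y => φ (2 * c - y)) (-deriv φ (2 * c - t)) t := by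
          have := (hd1 (2 * c - t)).hasDerivAt.comp t hinner
          simpa [mul_comm, Function.comp_def] using this
        have hb : HasDerivAt (fun y => -deriv φ (2 * c - y)) (deriv (deriv φ) (2 * c - t)) t := by
          have := ((hd2 (2 * c - t)).hasDerivAt.comp t hinner).neg
          simpa [mul_comm, Function.comp_def, Pi.neg_def] using this
        have hD : HasDerivAt w (-deriv φ (2 * c - t), deriv (deriv φ) (2 * c - t)) t :=
          ha.prodMk hb
        have hVw : V (w t) = (-deriv φ (2 * c - t), deriv (deriv φ) (2 * c - t)) := by
          simp only [hVdef, hwdef, hode' _ h1]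
        rw [hVw]
        exact hD.hasDerivWithinAt
      · show u c = w c
        have hcc : 2 * c - c = c := by ring
        simp [hudef, hwdef, hcc, hc']
    have h2c : u (2 * c) = w (2 * c) := hkey ⟨by linarith, le_rfl⟩
    rw [h2c]
    simp only [hwdef]
    rw [show 2 * c - 2 * c = 0 by ring, h0, h0']
  -- translation/periodicity from equal states
  have htrans : ∀ a b : ℝ, 0 ≤ a → 0 ≤ b → u a = u b →
      ∀ y, a ≤ y → u (y + (b - a)) = u y := by
    intro a b ha hb hab y hy
    have hkey : EqOn (fun t => u (t + (b - a))) u (Icc a y) := by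
      apply ODEunique hVlip
      · exact (hucont.comp (by continuity)).continuousOn
      · exact hucont.continuousOn
      · intro t ht
        have h1 : (0:ℝ) ≤ t + (b - a) := by
          have := ht.1; linarith
        have := (huV (t + (b - a)) h1).comp_add_const t (b - a)
        exact this.hasDerivWithinAt
      · intro t ht
        exact (huV t (le_trans ha ht.1)).hasDerivWithinAt
      · show u (a + (b - a)) = u a
        rw [show a + (b - a) = b by ring]
        exact hab.symm
    have := hkey ⟨hy, le_rfl⟩
    exact this
  -- no zero of deriv φ on [0, ∞)
  have hnozero : ∀ c, 0 ≤ c → deriv φ c ≠ 0 := by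
    intro c hc hc'
    have hcpos : 0 < c := by
      rcases hc.lt_or_eq with h | h
      · exact h
      · exfalso
        rw [← h, h0'] at hc'
        norm_num at hc'
    -- first reflection: state (0, -1) at a := 2c
    have hA := reflect c hcpos hc'
    set a : ℝ := 2 * c with hadef
    have hapos : 0 < a := by positivity
    have hφa : φ a = 0 := congrArg Prod.fst hA
    have hφ'a : deriv φ a = -1 := congrArg Prod.snd hA
    -- φ dips below 0 just after a
    have hda : HasDerivAt φ (-1) a := by rw [← hφ'a]; exact (hd1 a).hasDerivAt
    rw [hasDerivAt_iff_tendsto_slope] at hda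
    have hda' : Tendsto (slope φ a) (𝓝[>] a) (𝓝 (-1)) :=
      hda.mono_left (nhdsWithin_mono a (fun x hx => ne_of_gt hx))
    have hslope : ∀ᶠ y in 𝓝[>] a, slope φ a y < 0 :=
      hda'.eventually_lt_const (by norm_num)
    obtain ⟨y₃, hy₃s, hy₃a⟩ := (hslope.and self_mem_nhdsWithin).exists
    have hy₃a : a < y₃ := hy₃a
    have hφy₃ : φ y₃ < 0 := by
      rw [slope_def_field, hφa, sub_zero] at hy₃s
      rcases div_neg_iff.mp hy₃s with h | h
      · linarith [h.2]
      · exact h.1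
    -- eventually φ > L/2
    have hev : ∀ᶠ y in atTop, L / 2 < φ y := hlim.eventually_const_lt (by linarith)
    obtain ⟨Y₀, hY₀⟩ := eventually_atTop.mp hev
    set Y : ℝ := max Y₀ (y₃ + 1) with hYdef
    have hYy₃ : y₃ < Y := lt_of_lt_of_le (by linarith) (le_max_right _ _)
    have hYφ : L / 2 < φ Y := hY₀ Y (le_max_left _ _)
    -- minimum on [a, Y]
    obtain ⟨y₂, hy₂mem, hy₂min⟩ := isCompact_Icc.exists_isMinOn
      (nonempty_Icc.mpr (by linarith)) (hd1.continuous.continuousOn (s := Icc a Y))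
    have hy₂y₃ : φ y₂ ≤ φ y₃ := hy₂min ⟨hy₃a.le, hYy₃.le⟩
    have hy₂a : a < y₂ := by
      rcases hy₂mem.1.lt_or_eq with h | h
      · exact h
      · exfalso
        rw [← h] at hy₂y₃
        linarith
    have hy₂Y : y₂ < Y := by
      rcases hy₂mem.2.lt_or_eq with h | h
      · exact h
      · exfalso; rw [h] at hy₂y₃; linarith
    have hlocmin : IsLocalMin φ y₂ := hy₂min.isLocalMin (Icc_mem_nhds hy₂a hy₂Y)
    have hder₂ : deriv φ y₂ = 0 := hlocmin.deriv_eq_zero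
    -- second reflection: state (0, -1) at b := 2 y₂
    have hB := reflect y₂ (by linarith) hder₂
    set b : ℝ := 2 * y₂ with hbdef
    have hba : a < b := by simp only [hbdef]; linarith
    have hblow : u a = u b := by
      rw [hA, hB]
    -- periodicity
    have hper : ∀ n : ℕ, u (a + n * (b - a)) = u a := by
      intro n
      induction n with
      | zero => simp
      | succ n ih =>
        have hyn : a ≤ a + n * (b - a) := by
          have : (0:ℝ) ≤ n * (b - a) := mul_nonneg (Nat.cast_nonneg n) (by linarith)
          linarith
        have := htrans a b hapos.le (by linarith) hblow (a + n * (b - a)) hyn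
        rw [ih] at this
        rw [← this]
        congr 1
        push_cast
        ring
    -- contradiction with the limit
    have hseq : Tendsto (fun n : ℕ => a + n * (b - a)) atTop atTop := by
      apply tendsto_atTop_add_const_left
      exact Tendsto.atTop_mul_const (by linarith) tendsto_natCast_atTop_atTop
    have h1 : Tendsto (fun n : ℕ => φ (a + n * (b - a))) atTop (nhds L) :=
      hlim.comp hseq
    have h2 : (fun n : ℕ => φ (a + n * (b - a))) = fun _ => (0:ℝ) := by
      funext n
      have := congrArg Prod.fst (hper n)
      simpa [hudef, hφa] using this
    rw [h2] at h1
    have : L = 0 := tendsto_nhds_unique h1 tendsto_const_nhds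
    linarith
  -- deriv φ > 0 on [0, ∞)
  have hpos : ∀ y, 0 ≤ y → 0 < deriv φ y := by
    intro y hy
    rcases lt_trichotomy (deriv φ y) 0 with h | h | h
    · exfalso
      have hcont : ContinuousOn (deriv φ) (Icc 0 y) := hC1.continuous.continuousOn
      have h0y : (0:ℝ) ≤ y := hy
      have : (0:ℝ) ∈ Icc (deriv φ y) (deriv φ 0) := by
        rw [h0']; exact ⟨h.le, by norm_num⟩
      obtain ⟨z, hz, hz'⟩ := intermediate_value_Icc' h0y hcont this
      exact hnozero z hz.1 hz'
    · exact absurd h (hnozero y hy)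
    · exact h
  -- conclusions
  have hmono : StrictMonoOn φ (Ici 0) := by
    apply strictMonoOn_of_deriv_pos (convex_Ici 0) hd1.continuous.continuousOn
    intro x hx
    rw [interior_Ici] at hx
    exact hpos x hx.le
  intro y hy
  have hy0 : (0:ℝ) ≤ y := hy
  refine ⟨hpos y hy, ?_, ?_⟩
  · rcases eq_or_lt_of_le (show (0:ℝ) ≤ y from hy) with h | h
    · rw [← h, h0]
    · have := hmono (self_mem_Ici) hy h
      rw [h0] at this
      exact this.le
  · by_contra hge
    push_neg at hge
    have h1 : φ y < φ (y + 1) := hmono hy (by simp only [mem_Ici]; linarith) (by linarith)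
    have h2 : ∀ᶠ z in atTop, φ (y + 1) ≤ φ z := by
      filter_upwards [eventually_ge_atTop (y + 2)] with z hz
      exact (hmono (by simp only [mem_Ici]; linarith) (by simp only [mem_Ici]; linarith)
        (by linarith)).le
    have h3 : φ (y + 1) ≤ L := ge_of_tendsto hlim h2
    linarith
end
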